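/- arXiv:1503.04548 — 2 statements merged into one kernel-verified Lean document; each statement's English description precedes it below -/
import Mathlib

section
/- If CRCQ holds at x̄ ∈ Γ and the gradients {∇q_i(x̄) | i∈E} are linearly independent, then the bounded extreme point property holds at x̄. -/
open Metric Set Filter Topology
open scoped RealInnerProductSpace NNReal

noncomputable section

abbrev En (n : ℕ) : Type := EuclideanSpace ℝ (Fin n)

variable (n l₁ l₂ : ℕ) (q : Fin (l₁ + l₂) → En n → ℝ) (xb : En n) (φ : En n → ℝ)

/-- Feasibility for the constraint system `q i x = 0` (i ∈ E), `q i x ≤ 0` (i ∈ I). -/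
def Feas (x : En n) : Prop :=
  ∀ i : Fin (l₁ + l₂), ((i : ℕ) < l₁ → q i x = 0) ∧ (l₁ ≤ (i : ℕ) → q i x ≤ 0)

/-- The feasible (constraint) set Γ. -/
def Gam : Set (En n) := {x | Feas n l₁ l₂ q x}

/-- The normal cone `N_Θ(q(x))` to `Θ = {0}^{l₁} × ℝ^{l₂}_-`, described coordinatewise. -/
def NTheta (x : En n) : Set (En (l₁ + l₂)) :=
  {lam | ∀ i : Fin (l₁ + l₂), l₁ ≤ (i : ℕ) → 0 ≤ lam i ∧ (q i x ≠ 0 → lam i = 0)}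

/-- `∇q(x)*λ = ∑ i λ_i ∇q_i(x)`, as a continuous linear functional. -/
def gradSum (x : En n) (lam : En (l₁ + l₂)) : En n →L[ℝ] ℝ :=
  ∑ i, lam i • fderiv ℝ (q i) x

/-- The set of Lagrange multipliers Λ(x, x*) (with x* represented as a functional ξ). -/
def LamSet (x : En n) (ξ : En n →L[ℝ] ℝ) : Set (En (l₁ + l₂)) :=
  {lam | lam ∈ NTheta n l₁ l₂ q x ∧ gradSum n l₁ l₂ q x lam = ξ}

/-- The Hessian quadratic/bilinear form `⟨v, ∇²q_i(x) w⟩`. -/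
def hessQ (i : Fin (l₁ + l₂)) (x v w : En n) : ℝ :=
  fderiv ℝ (fderiv ℝ (q i)) x v w

/-- `⟨v, ∇²⟨λ,q⟩(x) v⟩`. -/
def quadF (x v : En n) (lam : En (l₁ + l₂)) : ℝ :=
  ∑ i, lam i * hessQ n l₁ l₂ q i x v v

/-- The multiplier set in direction v: maximizers of `λ ↦ ⟨v, ∇²⟨λ,q⟩(x)v⟩` over Λ(x,ξ). -/
def LamDir (x : En n) (ξ : En n →L[ℝ] ℝ) (v : En n) : Set (En (l₁ + l₂)) :=
  {lam | lam ∈ LamSet n l₁ l₂ q x ξ ∧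
    ∀ μ ∈ LamSet n l₁ l₂ q x ξ, quadF n l₁ l₂ q x v μ ≤ quadF n l₁ l₂ q x v lam}

/-- The regular (Fréchet) normal cone to Γ at x, as the polar of the contingent cone. -/
def NhatF (x : En n) : Set (En n →L[ℝ] ℝ) :=
  {ξ | ∀ u ∈ tangentConeAt ℝ (Gam n l₁ l₂ q) x, ξ u ≤ 0}

/-- The limiting (Mordukhovich) normal cone to Γ at x. -/
def Nlim (x : En n) : Set (En n →L[ℝ] ℝ) :=
  {ξ | ∃ xs : ℕ → En n, ∃ ξs : ℕ → (En n →L[ℝ] ℝ),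
    (∀ k, xs k ∈ Gam n l₁ l₂ q ∧ ξs k ∈ NhatF n l₁ l₂ q (xs k)) ∧
    Tendsto xs atTop (𝓝 x) ∧ Tendsto ξs atTop (𝓝 ξ)}

/-- The critical cone `K(x, x*) = T_Γ(x) ∩ {x*}⊥`. -/
def Kcone (x : En n) (ξ : En n →L[ℝ] ℝ) : Set (En n) :=
  tangentConeAt ℝ (Gam n l₁ l₂ q) x ∩ {v | ξ v = 0}

/-- MSCQ: metric subregularity of `x ↦ q(x) − Θ` at `(x̄, 0)`, in residual form. -/
def MSCQ : Prop :=
  ∃ κ > (0 : ℝ), ∃ U ∈ 𝓝 xb, ∀ x ∈ U,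
    Metric.infDist x (Gam n l₁ l₂ q) ≤
      κ * ((∑ i ∈ Finset.univ.filter (fun i : Fin (l₁ + l₂) => (i : ℕ) < l₁), |q i x|) +
        ∑ i ∈ Finset.univ.filter (fun i : Fin (l₁ + l₂) => l₁ ≤ (i : ℕ)), max (q i x) 0)

/-- MFCQ at x̄. -/
def MFCQ : Prop :=
  LinearIndependent ℝ
      (fun i : {i : Fin (l₁ + l₂) // (i : ℕ) < l₁} => fderiv ℝ (q i.1) xb) ∧
  ∃ u : En n, (∀ i : Fin (l₁ + l₂), (i : ℕ) < l₁ → fderiv ℝ (q i) xb u = 0) ∧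
    (∀ i : Fin (l₁ + l₂), l₁ ≤ (i : ℕ) → q i xb = 0 → fderiv ℝ (q i) xb u < 0)

/-- BEPP at x̄: linear independence of equality gradients plus a uniform bound on
extreme points of the multiplier sets near x̄. -/
def BEPP : Prop :=
  LinearIndependent ℝ
      (fun i : {i : Fin (l₁ + l₂) // (i : ℕ) < l₁} => fderiv ℝ (q i.1) xb) ∧
  ∃ U ∈ 𝓝 xb, ∃ κ > (0 : ℝ), ∀ x ∈ U, x ∈ Gam n l₁ l₂ q →
    ∀ ξ : En n →L[ℝ] ℝ, ∀ lam ∈ Set.extremePoints ℝ (LamSet n l₁ l₂ q x ξ),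
      ‖lam‖ ≤ κ * ‖ξ‖

/-- Active constraint indices at x̄ (all equality indices and active inequality indices). -/
def ActiveIdx : Set (Fin (l₁ + l₂)) := {i | (i : ℕ) < l₁ ∨ q i xb = 0}

/-- Rank of the gradient family `{∇q_i(x) | i ∈ A}`. -/
def rankA (x : En n) (A : Finset (Fin (l₁ + l₂))) : ℕ :=
  Module.finrank ℝ
    ↥(Submodule.span ℝ ((fun i => fderiv ℝ (q i) x) '' (↑A : Set (Fin (l₁ + l₂)))))

/-- CRCQ at x̄. -/
def CRCQ : Prop :=
  ∃ U ∈ 𝓝 xb, ∀ A : Finset (Fin (l₁ + l₂)), ↑A ⊆ ActiveIdx n l₁ l₂ q xb →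
    ∀ x ∈ U, rankA n l₁ l₂ q x A = rankA n l₁ l₂ q xb A

/-- The KKT condition at x̄ for minimizing φ over Γ. -/
def KKT : Prop :=
  ∃ lam ∈ NTheta n l₁ l₂ q xb, fderiv ℝ φ xb + gradSum n l₁ l₂ q xb lam = 0

/-- The set Λ̄_E of extreme multipliers in nonzero critical directions. -/
def LamBarE : Set (En (l₁ + l₂)) :=
  ⋃ v ∈ (Kcone n l₁ l₂ q xb (-(fderiv ℝ φ xb)) \ {0}),
    LamDir n l₁ l₂ q xb (-(fderiv ℝ φ xb)) v ∩
      Set.extremePoints ℝ (LamSet n l₁ l₂ q xb (-(fderiv ℝ φ xb)))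

/-- The localized argminimum set M_γ(v*) of the tilted problem. -/
def ArgminSet (γ : ℝ) (v : En n) : Set (En n) :=
  {x | x ∈ Gam n l₁ l₂ q ∧ x ∈ Metric.closedBall xb γ ∧
    ∀ y, y ∈ Gam n l₁ l₂ q → y ∈ Metric.closedBall xb γ →
      φ x - @inner ℝ _ _ v x ≤ φ y - @inner ℝ _ _ v y}

/-- Tilt-stable local minimizer of φ over Γ with modulus κ. -/
def TiltStableMod (κ : ℝ) : Prop :=
  ∃ γ > (0 : ℝ), ∃ δ > (0 : ℝ), ∃ m : En n → En n, m 0 = xb ∧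
    LipschitzOnWith (Real.toNNReal κ) m (Metric.ball (0 : En n) δ) ∧
    ∀ v ∈ Metric.ball (0 : En n) δ, ArgminSet n l₁ l₂ q xb φ γ v = {m v}

/-- Tilt-stable local minimizer (no modulus specified). -/
def TiltStable : Prop :=
  ∃ K : ℝ≥0, ∃ γ > (0 : ℝ), ∃ δ > (0 : ℝ), ∃ m : En n → En n, m 0 = xb ∧
    LipschitzOnWith K m (Metric.ball (0 : En n) δ) ∧
    ∀ v ∈ Metric.ball (0 : En n) δ, ArgminSet n l₁ l₂ q xb φ γ v = {m v}

end

section Aux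

open scoped Classical

lemma abs_coord_le_norm {m : ℕ} (x : En m) (i : Fin m) : |x i| ≤ ‖x‖ := by
  rw [EuclideanSpace.norm_eq]
  calc |x i| = Real.sqrt (‖x i‖ ^ 2) := by
        rw [Real.sqrt_sq_eq_abs, Real.norm_eq_abs, abs_abs]
    _ ≤ _ := Real.sqrt_le_sqrt (Finset.single_le_sum
        (f := fun j => ‖x j‖ ^ 2) (fun j _ => sq_nonneg _) (Finset.mem_univ i))

lemma gradSum_add (n l₁ l₂ : ℕ) (q : Fin (l₁ + l₂) → En n → ℝ) (x : En n)
    (a b : En (l₁ + l₂)) :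
    gradSum n l₁ l₂ q x (a + b) = gradSum n l₁ l₂ q x a + gradSum n l₁ l₂ q x b := by
  simp [gradSum, PiLp.add_apply, add_smul, Finset.sum_add_distrib]

lemma gradSum_sub (n l₁ l₂ : ℕ) (q : Fin (l₁ + l₂) → En n → ℝ) (x : En n)
    (a b : En (l₁ + l₂)) :
    gradSum n l₁ l₂ q x (a - b) = gradSum n l₁ l₂ q x a - gradSum n l₁ l₂ q x b := by
  simp [gradSum, PiLp.sub_apply, sub_smul, Finset.sum_sub_distrib]

lemma gradSum_smul (n l₁ l₂ : ℕ) (q : Fin (l₁ + l₂) → En n → ℝ) (x : En n)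
    (t : ℝ) (a : En (l₁ + l₂)) :
    gradSum n l₁ l₂ q x (t • a) = t • gradSum n l₁ l₂ q x a := by
  simp [gradSum, PiLp.smul_apply, smul_smul, Finset.smul_sum]

lemma gradSum_zero (n l₁ l₂ : ℕ) (q : Fin (l₁ + l₂) → En n → ℝ) (x : En n) :
    gradSum n l₁ l₂ q x 0 = 0 := by
  simp [gradSum]

/-- The family of gradients corresponding to the support of an extreme multiplier
is linearly independent. -/
lemma extreme_linIndep (n l₁ l₂ : ℕ) (q : Fin (l₁ + l₂) → En n → ℝ) (x : En n)
    (ξ : En n →L[ℝ] ℝ) (lam : En (l₁ + l₂))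
    (h : lam ∈ Set.extremePoints ℝ (LamSet n l₁ l₂ q x ξ)) :
    LinearIndependent ℝ (fun i : {i : Fin (l₁ + l₂) // lam i ≠ 0} => fderiv ℝ (q i.1) x) := by
  classical
  obtain ⟨hmem, hext⟩ := h
  obtain ⟨hN, hξ⟩ := hmem
  by_contra hdep
  obtain ⟨c, hcsum, i₀, hi₀⟩ := Fintype.not_linearIndependent_iff.mp hdep
  set μ : En (l₁ + l₂) := WithLp.toLp 2 (fun i => if h : lam i ≠ 0 then c ⟨i, h⟩ else 0) with hμdef
  have hμ : ∀ i (h : lam i ≠ 0), μ i = c ⟨i, h⟩ := by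
    intro i hi; simp only [hμdef, PiLp.toLp_apply, dif_pos hi]
  have hμ0 : ∀ i, lam i = 0 → μ i = 0 := by
    intro i hi; simp only [hμdef, PiLp.toLp_apply, hi, dif_neg]; simp [hi]
  have hsupp : ∀ i, μ i ≠ 0 → lam i ≠ 0 := by
    intro i hi hlam; exact hi (hμ0 i hlam)
  have hμne : μ ≠ 0 := by
    intro hzero
    have : μ i₀.1 = 0 := by rw [hzero]; rfl
    rw [hμ i₀.1 i₀.2] at this
    exact hi₀ (by simpa using this)
  have hμsum : gradSum n l₁ l₂ q x μ = 0 := by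
    rw [gradSum]
    have h1 : ∑ i ∈ Finset.univ.filter (fun i => lam i ≠ 0), μ i • fderiv ℝ (q i) x
        = ∑ i, μ i • fderiv ℝ (q i) x := by
      refine Finset.sum_subset (Finset.filter_subset _ _) ?_
      intro i _ hi
      have : lam i = 0 := by
        by_contra hne; exact hi (Finset.mem_filter.mpr ⟨Finset.mem_univ _, hne⟩)
      rw [hμ0 i this, zero_smul]
    rw [← h1]
    rw [Finset.sum_subtype (Finset.univ.filter (fun i => lam i ≠ 0))
      (p := fun i => lam i ≠ 0) (by simp) (fun i => μ i • fderiv ℝ (q i) x)]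
    rw [← hcsum]
    exact Finset.sum_congr rfl fun j _ => by rw [hμ j.1 j.2]
  -- choose the step size t
  set S : Finset (Fin (l₁ + l₂)) :=
    Finset.univ.filter (fun i => l₁ ≤ (i : ℕ) ∧ μ i ≠ 0) with hSdef
  have hlampos : ∀ i ∈ S, 0 < lam i := by
    intro i hi
    rw [hSdef, Finset.mem_filter] at hi
    have h1 := (hN i hi.2.1).1
    have h2 := hsupp i hi.2.2
    exact lt_of_le_of_ne h1 (Ne.symm h2)
  set t : ℝ := if hS : S.Nonempty then S.inf' hS (fun i => lam i / |μ i|) else 1 with htdef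
  have ht : 0 < t := by
    rw [htdef]
    split_ifs with hS
    · rw [Finset.lt_inf'_iff]
      intro i hi
      have hμi : μ i ≠ 0 := by
        rw [hSdef, Finset.mem_filter] at hi; exact hi.2.2
      exact div_pos (hlampos i hi) (abs_pos.mpr hμi)
    · exact one_pos
  have hkey : ∀ i : Fin (l₁ + l₂), l₁ ≤ (i : ℕ) → μ i ≠ 0 → t * |μ i| ≤ lam i := by
    intro i hli hμi
    have hiS : i ∈ S := by
      rw [hSdef, Finset.mem_filter]; exact ⟨Finset.mem_univ _, hli, hμi⟩
    have hS : S.Nonempty := ⟨i, hiS⟩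
    have h1 : t ≤ lam i / |μ i| := by
      rw [htdef, dif_pos hS]; exact Finset.inf'_le _ hiS
    rw [le_div_iff₀ (abs_pos.mpr hμi)] at h1
    linarith [h1]
  -- the two perturbed multipliers
  have hNTheta : ∀ (s : ℝ), |s| ≤ 1 →
      lam + (s * t) • μ ∈ NTheta n l₁ l₂ q x := by
    intro s hs i hli
    have happly : (lam + (s * t) • μ) i = lam i + (s * t) * μ i := rfl
    constructor
    · rw [happly]
      by_cases hμi : μ i = 0
      · simp [hμi]; exact (hN i hli).1
      · have h1 := hkey i hli hμi
        have h2 : |(s * t) * μ i| ≤ t * |μ i| := by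
          rw [abs_mul, abs_mul, abs_of_pos ht]
          calc |s| * t * |μ i| ≤ 1 * t * |μ i| := by
                apply mul_le_mul_of_nonneg_right _ (abs_nonneg _)
                exact mul_le_mul_of_nonneg_right hs ht.le
            _ = t * |μ i| := by ring
        have := neg_abs_le ((s * t) * μ i)
        linarith
    · intro hqx
      have h1 : lam i = 0 := (hN i hli).2 hqx
      have h2 : μ i = 0 := hμ0 i h1
      rw [happly, h1, h2]; ring
  have hmem' : ∀ (s : ℝ), |s| ≤ 1 → lam + (s * t) • μ ∈ LamSet n l₁ l₂ q x ξ := by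
    intro s hs
    refine ⟨hNTheta s hs, ?_⟩
    rw [gradSum_add, gradSum_smul, hμsum, hξ]
    simp
  have h₁ : lam + ((-1 : ℝ) * t) • μ ∈ LamSet n l₁ l₂ q x ξ := hmem' (-1) (by norm_num)
  have h₂ : lam + ((1 : ℝ) * t) • μ ∈ LamSet n l₁ l₂ q x ξ := hmem' 1 (by norm_num)
  have hseg : lam ∈ openSegment ℝ (lam + ((-1 : ℝ) * t) • μ) (lam + ((1 : ℝ) * t) • μ) := by
    refine ⟨1/2, 1/2, by norm_num, by norm_num, by norm_num, ?_⟩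
    module
  have heq1 : lam + ((-1 : ℝ) * t) • μ = lam := hext h₁ h₂ hseg
  have htμ : ((-1 : ℝ) * t) • μ = 0 := by
    have h5 := congrArg (fun z => z - lam) heq1
    simpa [add_sub_cancel_left] using h5
  rw [smul_eq_zero] at htμ
  rcases htμ with h | h
  · rw [mul_eq_zero] at h
    rcases h with h | h
    · norm_num at h
    · exact absurd h (ne_of_gt ht)
  · exact hμne h

/-- Quantitative injectivity of `gradSum` on multipliers supported on a set whose
gradients are linearly independent. -/
lemma coercive_of_linIndep (n l₁ l₂ : ℕ) (q : Fin (l₁ + l₂) → En n → ℝ) (xb : En n)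
    (A : Finset (Fin (l₁ + l₂)))
    (hLI : LinearIndependent ℝ (fun i : ↥A => fderiv ℝ (q i.1) xb)) :
    ∃ c > (0 : ℝ), ∀ lam : En (l₁ + l₂), (∀ i ∉ A, lam i = 0) →
      c * ‖lam‖ ≤ ‖gradSum n l₁ l₂ q xb lam‖ := by
  classical
  rcases A.eq_empty_or_nonempty with rfl | ⟨j₀, hj₀⟩
  · refine ⟨1, one_pos, fun lam hlam => ?_⟩
    have : lam = 0 := PiLp.ext fun i => hlam i (by simp)
    rw [this, gradSum_zero]
    simp
  · -- compactness argument on the sphere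
    set T : En (l₁ + l₂) → (En n →L[ℝ] ℝ) := gradSum n l₁ l₂ q xb with hT
    set K : Set (En (l₁ + l₂)) :=
      {lam | ∀ i ∉ A, lam i = 0} ∩ Metric.sphere 0 1 with hK
    have hclosed : IsClosed {lam : En (l₁ + l₂) | ∀ i ∉ A, lam i = 0} := by
      have heq : {lam : En (l₁ + l₂) | ∀ i ∉ A, lam i = 0}
          = ⋂ i : Fin (l₁ + l₂), {lam : En (l₁ + l₂) | i ∉ A → lam i = 0} := by
        ext lam; simp [Set.mem_iInter]
      rw [heq]
      refine isClosed_iInter fun i => ?_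
      by_cases hi : i ∈ A
      · have : {lam : En (l₁ + l₂) | i ∉ A → lam i = 0} = Set.univ := by
          ext lam; simp [hi]
        rw [this]; exact isClosed_univ
      · have : {lam : En (l₁ + l₂) | i ∉ A → lam i = 0}
            = (EuclideanSpace.proj (𝕜 := ℝ) i) ⁻¹' {0} := by
          ext lam; simp [hi]
        rw [this]
        exact IsClosed.preimage (EuclideanSpace.proj (𝕜 := ℝ) i).continuous isClosed_singleton
    have hKcompact : IsCompact K := (isCompact_sphere 0 1).inter_left hclosed
    have hKne : K.Nonempty := by
      refine ⟨EuclideanSpace.single j₀ (1 : ℝ), ?_, ?_⟩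
      · intro i hi
        rw [EuclideanSpace.single_apply]
        simp only [if_neg (fun h : i = j₀ => hi (h ▸ hj₀))]
      · rw [mem_sphere_iff_norm, sub_zero, EuclideanSpace.norm_single]
        simp
    have hcont : Continuous fun lam : En (l₁ + l₂) => ‖T lam‖ := by
      rw [hT]
      refine Continuous.norm ?_
      unfold gradSum
      exact continuous_finset_sum _ fun i _ =>
        ((EuclideanSpace.proj (𝕜 := ℝ) i).continuous).smul continuous_const
    obtain ⟨lam₀, hlam₀K, hmin⟩ := hKcompact.exists_isMinOn hKne hcont.continuousOn
    refine ⟨‖T lam₀‖, ?_, ?_⟩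
    · rcases (norm_nonneg (T lam₀)).lt_or_eq with h | h
      · exact h
      · exfalso
        have hT0 : T lam₀ = 0 := norm_eq_zero.mp h.symm
        -- lam₀ = 0 via linear independence
        have hsum : ∑ j : ↥A, lam₀ j.1 • fderiv ℝ (q j.1) xb = 0 := by
          rw [← Finset.sum_subtype A (p := fun i => i ∈ A) (by simp)
            (fun i => lam₀ i • fderiv ℝ (q i) xb)]
          rw [show ∑ i ∈ A, lam₀ i • fderiv ℝ (q i) xb
              = ∑ i, lam₀ i • fderiv ℝ (q i) xb from
            Finset.sum_subset (Finset.subset_univ _) fun i _ hi => by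
              rw [hlam₀K.1 i hi, zero_smul]]
          exact hT0
        have hzero : ∀ j : ↥A, lam₀ j.1 = 0 :=
          Fintype.linearIndependent_iff.mp hLI (fun j => lam₀ j.1) hsum
        have : lam₀ = 0 := PiLp.ext fun i => by
          by_cases hi : i ∈ A
          · exact hzero ⟨i, hi⟩
          · exact hlam₀K.1 i hi
        have hnorm := hlam₀K.2
        rw [mem_sphere_iff_norm, sub_zero, this, norm_zero] at hnorm
        norm_num at hnorm
    · intro lam hlam
      by_cases h0 : lam = 0
      · rw [h0, show T (0 : En (l₁ + l₂)) = 0 from gradSum_zero n l₁ l₂ q xb]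
        simp
      · have hpos : 0 < ‖lam‖ := norm_pos_iff.mpr h0
        set u : En (l₁ + l₂) := ‖lam‖⁻¹ • lam with hu
        have huK : u ∈ K := by
          constructor
          · intro i hi
            have : u i = ‖lam‖⁻¹ * lam i := rfl
            rw [this, hlam i hi, mul_zero]
          · rw [mem_sphere_iff_norm, sub_zero, hu, norm_smul, norm_inv, norm_norm]
            field_simp
        have h1 : ‖T lam₀‖ ≤ ‖T u‖ := hmin huK
        have h2 : ‖T u‖ = ‖lam‖⁻¹ * ‖T lam‖ := by
          rw [hu, hT, gradSum_smul]
          have h8 := norm_smul (‖lam‖⁻¹) (gradSum n l₁ l₂ q xb lam)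
          simpa using h8
        rw [h2, inv_mul_eq_div, le_div_iff₀ hpos] at h1
        exact h1

end Aux

/-- CRCQ together with linear independence of the equality gradients
implies the bounded extreme point property. -/
theorem stmt5 (n l₁ l₂ : ℕ) (q : Fin (l₁ + l₂) → En n → ℝ) (xb : En n)
    (hq : ∀ i, ContDiff ℝ 1 (q i)) (hfeas : Feas n l₁ l₂ q xb)
    (hcrcq : CRCQ n l₁ l₂ q xb)
    (hLI : LinearIndependent ℝ
      (fun i : {i : Fin (l₁ + l₂) // (i : ℕ) < l₁} => fderiv ℝ (q i.1) xb)) :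
    BEPP n l₁ l₂ q xb := by
  classical
  obtain ⟨U₀, hU₀nhds, hrank⟩ := hcrcq
  -- coercivity constants for each potential support set
  have hc : ∀ A : Finset (Fin (l₁ + l₂)), ∃ c > (0 : ℝ),
      (LinearIndependent ℝ (fun i : ↥A => fderiv ℝ (q i.1) xb) →
        ∀ lam : En (l₁ + l₂), (∀ i ∉ A, lam i = 0) →
          c * ‖lam‖ ≤ ‖gradSum n l₁ l₂ q xb lam‖) := by
    intro A
    by_cases hLIA : LinearIndependent ℝ (fun i : ↥A => fderiv ℝ (q i.1) xb)
    · obtain ⟨c, hc0, hcb⟩ := coercive_of_linIndep n l₁ l₂ q xb A hLIA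
      exact ⟨c, hc0, fun _ => hcb⟩
    · exact ⟨1, one_pos, fun h => absurd h hLIA⟩
  choose cf hcf0 hcfb using hc
  have huniv_ne : (Finset.univ : Finset (Finset (Fin (l₁ + l₂)))).Nonempty :=
    ⟨∅, Finset.mem_univ _⟩
  set c : ℝ := Finset.univ.inf' huniv_ne cf with hcdef
  have hc0 : 0 < c := by
    rw [hcdef, Finset.lt_inf'_iff]
    exact fun A _ => hcf0 A
  have hcle : ∀ A, c ≤ cf A := fun A => Finset.inf'_le _ (Finset.mem_univ A)
  -- the neighborhood
  have hU₀ev : ∀ᶠ x in 𝓝 xb, x ∈ U₀ := hU₀nhds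
  have hsign : ∀ᶠ x in 𝓝 xb, ∀ i : Fin (l₁ + l₂),
      l₁ ≤ (i : ℕ) → q i xb ≠ 0 → q i x ≠ 0 := by
    rw [eventually_all]
    intro i
    by_cases hi : q i xb ≠ 0
    · have := ((hq i).continuous.continuousAt (x := xb)).eventually_ne hi
      filter_upwards [this] with x hx _ _
      exact hx
    · filter_upwards with x _ h2
      exact absurd h2 hi
  have hdist : ∀ᶠ x in 𝓝 xb,
      ∑ i, ‖fderiv ℝ (q i) x - fderiv ℝ (q i) xb‖ ≤ c / 2 := by
    have hcont : Continuous fun x : En n =>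
        ∑ i, ‖fderiv ℝ (q i) x - fderiv ℝ (q i) xb‖ :=
      continuous_finset_sum _ fun i _ =>
        (((hq i).continuous_fderiv one_ne_zero).sub continuous_const).norm
    have htend : Tendsto (fun x : En n => ∑ i, ‖fderiv ℝ (q i) x - fderiv ℝ (q i) xb‖)
        (𝓝 xb) (𝓝 0) := by
      have h6 := hcont.tendsto xb
      simpa using h6
    have := htend.eventually_lt_const (show (0 : ℝ) < c / 2 by positivity)
    filter_upwards [this] with x hx
    exact hx.le
  obtain ⟨U, hUnhds, hU⟩ :=
    Filter.eventually_iff_exists_mem.mp ((hU₀ev.and hsign).and hdist)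
  refine ⟨hLI, U, hUnhds, 2 / c, by positivity, ?_⟩
  intro x hxU hxGam ξ lam hlam
  obtain ⟨⟨hxU₀, hxsign⟩, hxdist⟩ := hU x hxU
  by_cases hlam0 : lam = 0
  · rw [hlam0, norm_zero]
    positivity
  -- support of lam
  set A : Finset (Fin (l₁ + l₂)) := Finset.univ.filter (fun i => lam i ≠ 0) with hA
  have hmemA : ∀ i, i ∈ A ↔ lam i ≠ 0 := by
    intro i; rw [hA, Finset.mem_filter]; simp
  have hlamLS : lam ∈ LamSet n l₁ l₂ q x ξ := hlam.1
  have hAsub : ↑A ⊆ ActiveIdx n l₁ l₂ q xb := by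
    intro i hiA
    rcases lt_or_ge (i : ℕ) l₁ with h | h
    · exact Or.inl h
    · right
      have hqix : q i x = 0 := by
        by_contra hne
        exact (hmemA i).mp hiA ((hlamLS.1 i h).2 hne)
      by_contra hne0
      exact hxsign i h hne0 hqix
  -- linear independence of support gradients at x (extreme point property)
  have hLIx : LinearIndependent ℝ (fun i : ↥A => fderiv ℝ (q i.1) x) := by
    have h0 := extreme_linIndep n l₁ l₂ q x ξ lam hlam
    refine h0.comp (fun j : ↥A => (⟨j.1, (hmemA j.1).mp j.2⟩ : {i // lam i ≠ 0})) ?_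
    intro a b hab
    have h7 := congrArg (Subtype.val : {i : Fin (l₁ + l₂) // lam i ≠ 0} → Fin (l₁ + l₂)) hab
    exact Subtype.ext h7
  -- transfer to xb via CRCQ
  have hrangex : Set.range (fun i : ↥A => fderiv ℝ (q i.1) x)
      = (fun i => fderiv ℝ (q i) x) '' ↑A := by
    ext y
    constructor
    · rintro ⟨⟨i, hi⟩, rfl⟩; exact ⟨i, hi, rfl⟩
    · rintro ⟨i, hi, rfl⟩; exact ⟨⟨i, hi⟩, rfl⟩
  have hrangexb : Set.range (fun i : ↥A => fderiv ℝ (q i.1) xb)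
      = (fun i => fderiv ℝ (q i) xb) '' ↑A := by
    ext y
    constructor
    · rintro ⟨⟨i, hi⟩, rfl⟩; exact ⟨i, hi, rfl⟩
    · rintro ⟨i, hi, rfl⟩; exact ⟨⟨i, hi⟩, rfl⟩
  have hcard : A.card = rankA n l₁ l₂ q x A := by
    have h1 := linearIndependent_iff_card_eq_finrank_span.mp hLIx
    rw [Fintype.card_coe, hrangex] at h1
    exact h1
  have hcard' : A.card = rankA n l₁ l₂ q xb A := by
    rw [hcard, hrank A hAsub x hxU₀]
  have hLIxb : LinearIndependent ℝ (fun i : ↥A => fderiv ℝ (q i.1) xb) := by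
    apply linearIndependent_iff_card_eq_finrank_span.mpr
    rw [Fintype.card_coe, hrangexb]
    exact hcard'
  have hzero : ∀ i ∉ A, lam i = 0 := fun i hi =>
    not_not.mp (fun h => hi ((hmemA i).mpr h))
  -- coercivity at xb
  have hb := hcfb A hLIxb lam hzero
  have h1 : c * ‖lam‖ ≤ ‖gradSum n l₁ l₂ q xb lam‖ :=
    le_trans (mul_le_mul_of_nonneg_right (hcle A) (norm_nonneg lam)) hb
  -- perturbation bound
  have hdiff : ‖gradSum n l₁ l₂ q xb lam - gradSum n l₁ l₂ q x lam‖ ≤ ‖lam‖ * (c / 2) := by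
    have heq : gradSum n l₁ l₂ q xb lam - gradSum n l₁ l₂ q x lam
        = ∑ i, lam i • (fderiv ℝ (q i) xb - fderiv ℝ (q i) x) := by
      simp [gradSum, smul_sub, Finset.sum_sub_distrib]
    rw [heq]
    calc ‖∑ i, lam i • (fderiv ℝ (q i) xb - fderiv ℝ (q i) x)‖
        ≤ ∑ i, ‖lam i • (fderiv ℝ (q i) xb - fderiv ℝ (q i) x)‖ := norm_sum_le _ _
      _ = ∑ i, |lam i| * ‖fderiv ℝ (q i) xb - fderiv ℝ (q i) x‖ := by
          simp [norm_smul, Real.norm_eq_abs]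
      _ ≤ ∑ i, ‖lam‖ * ‖fderiv ℝ (q i) xb - fderiv ℝ (q i) x‖ :=
          Finset.sum_le_sum fun i _ =>
            mul_le_mul_of_nonneg_right (abs_coord_le_norm lam i) (norm_nonneg _)
      _ = ‖lam‖ * ∑ i, ‖fderiv ℝ (q i) xb - fderiv ℝ (q i) x‖ := by
          rw [Finset.mul_sum]
      _ ≤ ‖lam‖ * (c / 2) := by
          apply mul_le_mul_of_nonneg_left _ (norm_nonneg _)
          calc ∑ i, ‖fderiv ℝ (q i) xb - fderiv ℝ (q i) x‖
              = ∑ i, ‖fderiv ℝ (q i) x - fderiv ℝ (q i) xb‖ := by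
                exact Finset.sum_congr rfl fun i _ => norm_sub_rev _ _
            _ ≤ c / 2 := hxdist
  have hξeq : gradSum n l₁ l₂ q x lam = ξ := hlamLS.2
  have h2 : ‖gradSum n l₁ l₂ q xb lam‖ ≤ ‖ξ‖ + ‖lam‖ * (c / 2) := by
    have h3 := norm_sub_norm_le (gradSum n l₁ l₂ q xb lam) (gradSum n l₁ l₂ q x lam)
    rw [hξeq] at h3 hdiff
    linarith [hdiff, h3]
  rw [div_mul_eq_mul_div, le_div_iff₀ hc0]
  nlinarith [h1, h2, norm_nonneg lam, norm_nonneg ξ]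
end

section
/- Under MSCQ and BEPP at x̄ ∈ Γ, the indicator function δ_Γ is prox-regular and subdifferentially continuous at x̄ for every subgradient x̄* ∈ ∂δ_Γ(x̄). In particular, there exist r, ε > 0 such that for all x, u ∈ B_ε(x̄) ∩ Γ and all v* ∈ N_Γ(u) ∩ B_ε(x̄*) one has 0 ≥ ⟨v*, x − u⟩ − (r/2)‖x − u‖². -/
open Metric Set Filter Topology
open scoped RealInnerProductSpace NNReal

section Aux

variable {n l₁ l₂ : ℕ} {q : Fin (l₁ + l₂) → En n → ℝ} {xb : En n}

/-- The residual function in MSCQ. -/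
def Res (q : Fin (l₁ + l₂) → En n → ℝ) (x : En n) : ℝ :=
  (∑ i ∈ Finset.univ.filter (fun i : Fin (l₁ + l₂) => (i : ℕ) < l₁), |q i x|) +
    ∑ i ∈ Finset.univ.filter (fun i : Fin (l₁ + l₂) => l₁ ≤ (i : ℕ)), max (q i x) 0

lemma isClosed_Gam (hq : ∀ i, Continuous (q i)) : IsClosed (Gam n l₁ l₂ q) := by
  have : Gam n l₁ l₂ q = ⋂ i : Fin (l₁ + l₂),
      ({x | (i : ℕ) < l₁ → q i x = 0} ∩ {x | l₁ ≤ (i : ℕ) → q i x ≤ 0}) := by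
    ext x; simp [Gam, Feas, Set.mem_iInter, forall_and]
  rw [this]
  refine isClosed_iInter fun i => IsClosed.inter ?_ ?_
  · by_cases h : (i : ℕ) < l₁
    · have : {x : En n | (i : ℕ) < l₁ → q i x = 0} = {x | q i x = 0} := by
        ext x; simp [h]
      rw [this]; exact isClosed_eq (hq i) continuous_const
    · have : {x : En n | (i : ℕ) < l₁ → q i x = 0} = Set.univ := by
        ext x; simp [h]
      rw [this]; exact isClosed_univ
  · by_cases h : l₁ ≤ (i : ℕ)
    · have : {x : En n | l₁ ≤ (i : ℕ) → q i x ≤ 0} = {x | q i x ≤ 0} := by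
        ext x; simp [h]
      rw [this]; exact isClosed_le (hq i) continuous_const
    · have : {x : En n | l₁ ≤ (i : ℕ) → q i x ≤ 0} = Set.univ := by
        ext x; simp [h]
      rw [this]; exact isClosed_univ

/-- A uniform Lipschitz constant for the gradients on a closed ball. -/
lemma exists_grad_lipschitz (hq : ∀ i, ContDiff ℝ 2 (q i)) (ρ' : ℝ) :
    ∃ L ≥ (0:ℝ), ∀ i, ∀ z ∈ Metric.closedBall xb ρ', ∀ w ∈ Metric.closedBall xb ρ',
      ‖fderiv ℝ (q i) z - fderiv ℝ (q i) w‖ ≤ L * ‖z - w‖ := by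
  have hK : IsCompact (Metric.closedBall xb ρ') := isCompact_closedBall _ _
  have hg1 : ∀ i, ContDiff ℝ 1 (fderiv ℝ (q i)) := fun i =>
    (hq i).fderiv_right (by norm_num)
  have hCi : ∀ i : Fin (l₁ + l₂), ∃ C, ∀ x ∈ Metric.closedBall xb ρ',
      ‖fderiv ℝ (fderiv ℝ (q i)) x‖ ≤ C := by
    intro i
    exact hK.exists_bound_of_continuousOn
      (((hg1 i).fderiv_right (m := 0) (by norm_num)).continuous.continuousOn)
  choose C hC using hCi
  refine ⟨∑ i, max (C i) 0, Finset.sum_nonneg fun i _ => le_max_right _ _, ?_⟩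
  intro i z hz w hw
  have hCle : C i ≤ ∑ j, max (C j) 0 := by
    calc C i ≤ max (C i) 0 := le_max_left _ _
    _ ≤ ∑ j, max (C j) 0 :=
      Finset.single_le_sum (f := fun j => max (C j) 0)
        (fun j _ => le_max_right _ _) (Finset.mem_univ i)
  have := Convex.norm_image_sub_le_of_norm_fderiv_le
    (f := fderiv ℝ (q i)) (C := ∑ j, max (C j) 0)
    (fun x _ => ((hg1 i).differentiable (by norm_num)).differentiableAt)
    (fun x hx => le_trans (hC i x hx) hCle) (convex_closedBall _ _) hw hz
  simpa [dist_eq_norm] using this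

/-- Second-order Taylor estimate from Lipschitz gradients. -/
lemma taylor_est {i : Fin (l₁ + l₂)} {ρ' L : ℝ} (hL0 : 0 ≤ L)
    (hq : ∀ i, ContDiff ℝ 2 (q i))
    (hLip : ∀ z ∈ Metric.closedBall xb ρ', ∀ w ∈ Metric.closedBall xb ρ',
      ‖fderiv ℝ (q i) z - fderiv ℝ (q i) w‖ ≤ L * ‖z - w‖)
    {x y : En n} (hx : x ∈ Metric.closedBall xb ρ') (hy : y ∈ Metric.closedBall xb ρ') :
    |q i x - q i y - fderiv ℝ (q i) y (x - y)| ≤ L * ‖x - y‖ ^ 2 := by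
  have hconv : Convex ℝ (Metric.closedBall xb ρ') := convex_closedBall _ _
  have hseg : segment ℝ y x ⊆ Metric.closedBall xb ρ' := hconv.segment_subset hy hx
  have hbound : ∀ z ∈ segment ℝ y x,
      ‖fderiv ℝ (q i) z - fderiv ℝ (q i) y‖ ≤ L * ‖x - y‖ := by
    intro z hz
    obtain ⟨a, b, ha, hb, hab, rfl⟩ := hz
    have h1 : a • y + b • x - y = b • (x - y) := by
      have : a • y = (1 - b) • y := by rw [← hab]; ring_nf
      rw [this]; module
    have h2 : ‖a • y + b • x - y‖ ≤ ‖x - y‖ := by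
      rw [h1, norm_smul]
      calc ‖b‖ * ‖x - y‖ = b * ‖x - y‖ := by rw [Real.norm_of_nonneg hb]
      _ ≤ 1 * ‖x - y‖ := by
          apply mul_le_mul_of_nonneg_right _ (norm_nonneg _)
          linarith
      _ = ‖x - y‖ := one_mul _
    calc ‖fderiv ℝ (q i) (a • y + b • x) - fderiv ℝ (q i) y‖
        ≤ L * ‖a • y + b • x - y‖ := hLip _ (hseg ⟨a, b, ha, hb, hab, rfl⟩) _ hy
      _ ≤ L * ‖x - y‖ := mul_le_mul_of_nonneg_left h2 hL0
  have := Convex.norm_image_sub_le_of_norm_fderiv_le' (f := q i) (φ := fderiv ℝ (q i) y)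
    (s := segment ℝ y x) (C := L * ‖x - y‖)
    (fun z _ => ((hq i).differentiable (by norm_num)).differentiableAt)
    hbound (convex_segment _ _) (left_mem_segment _ _ _) (right_mem_segment _ _ _)
  calc |q i x - q i y - fderiv ℝ (q i) y (x - y)| ≤ L * ‖x - y‖ * ‖x - y‖ := by
        simpa [Real.norm_eq_abs] using this
    _ = L * ‖x - y‖ ^ 2 := by ring

lemma gradSum_apply (u : En n) (lam : En (l₁ + l₂)) (v : En n) :
    gradSum n l₁ l₂ q u lam v = ∑ i, lam i * fderiv ℝ (q i) u v := by
  simp [gradSum, ContinuousLinearMap.sum_apply]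

/-- Key estimate: given the multiplier representation, the prox-regularity inequality. -/
lemma lemA {ρ' L c : ℝ} (hL0 : 0 ≤ L) (hc : 0 ≤ c)
    (hq : ∀ i, ContDiff ℝ 2 (q i))
    (hLip : ∀ i, ∀ z ∈ Metric.closedBall xb ρ', ∀ w ∈ Metric.closedBall xb ρ',
      ‖fderiv ℝ (q i) z - fderiv ℝ (q i) w‖ ≤ L * ‖z - w‖)
    {u x : En n} (hu : u ∈ Metric.closedBall xb ρ') (huΓ : u ∈ Gam n l₁ l₂ q)
    (hx : x ∈ Metric.closedBall xb ρ') (hxΓ : x ∈ Gam n l₁ l₂ q)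
    {ξ : En n →L[ℝ] ℝ} {lam : En (l₁ + l₂)}
    (hlamN : lam ∈ NTheta n l₁ l₂ q u) (hlamG : gradSum n l₁ l₂ q u lam = ξ)
    (hlamB : ∀ i, |lam i| ≤ c) :
    ξ (x - u) ≤ (l₁ + l₂) * c * L * ‖x - u‖ ^ 2 := by
  have hξ : ξ (x - u) = ∑ i, lam i * fderiv ℝ (q i) u (x - u) := by
    rw [← hlamG, gradSum_apply]
  have key : ∀ i : Fin (l₁ + l₂),
      lam i * fderiv ℝ (q i) u (x - u) ≤ c * (L * ‖x - u‖ ^ 2) := by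
    intro i
    have htay := taylor_est (i := i) hL0 hq (hLip i) hx hu
    -- lam i * q i x ≤ 0, lam i * q i u = 0
    have h1 : lam i * q i x ≤ 0 := by
      rcases lt_or_ge (i : ℕ) l₁ with h | h
      · rw [(hxΓ i).1 h]; simp
      · exact mul_nonpos_of_nonneg_of_nonpos (hlamN i h).1 ((hxΓ i).2 h)
    have h2 : lam i * q i u = 0 := by
      rcases lt_or_ge (i : ℕ) l₁ with h | h
      · rw [(huΓ i).1 h]; simp
      · by_cases hqu : q i u = 0
        · rw [hqu]; simp
        · rw [(hlamN i h).2 hqu]; simp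
    have h3 : lam i * fderiv ℝ (q i) u (x - u)
        = lam i * q i x - lam i * q i u
          - lam i * (q i x - q i u - fderiv ℝ (q i) u (x - u)) := by ring
    have h4 : |lam i * (q i x - q i u - fderiv ℝ (q i) u (x - u))|
        ≤ c * (L * ‖x - u‖ ^ 2) := by
      rw [abs_mul]
      exact mul_le_mul (hlamB i) htay (abs_nonneg _)
        hc
    have h5 := (abs_le.mp h4).1
    rw [h3]
    linarith
  calc ξ (x - u) = ∑ i, lam i * fderiv ℝ (q i) u (x - u) := hξ
    _ ≤ ∑ _i : Fin (l₁ + l₂), c * (L * ‖x - u‖ ^ 2) :=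
        Finset.sum_le_sum fun i _ => key i
    _ = (l₁ + l₂) * c * L * ‖x - u‖ ^ 2 := by
        rw [Finset.sum_const]
        simp [Finset.card_univ]
        ring

/-- The directional residual bound `R(v)`. -/
noncomputable def Rval (q : Fin (l₁ + l₂) → En n → ℝ) (u v : En n) : ℝ :=
  (∑ i ∈ Finset.univ.filter (fun i : Fin (l₁ + l₂) => (i : ℕ) < l₁),
      |fderiv ℝ (q i) u v|) +
    ∑ i ∈ Finset.univ.filter (fun i : Fin (l₁ + l₂) => l₁ ≤ (i : ℕ)),
      (if q i u = 0 then max (fderiv ℝ (q i) u v) 0 else 0)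

lemma Rval_nonneg (u v : En n) : 0 ≤ Rval q u v := by
  apply add_nonneg <;> apply Finset.sum_nonneg <;> intro i _
  · exact abs_nonneg _
  · split <;> simp [le_max_right]

lemma key_dir {κ ρ L : ℝ} (hκ : 0 < κ) (hρ : 0 < ρ) (hL0 : 0 ≤ L)
    (hq : ∀ i, ContDiff ℝ 2 (q i))
    (hres : ∀ x ∈ Metric.closedBall xb (2*ρ), Metric.infDist x (Gam n l₁ l₂ q) ≤ κ * Res q x)
    (hLip : ∀ i, ∀ z ∈ Metric.closedBall xb (2*ρ), ∀ w ∈ Metric.closedBall xb (2*ρ),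
      ‖fderiv ℝ (q i) z - fderiv ℝ (q i) w‖ ≤ L * ‖z - w‖)
    {u : En n} (hu : u ∈ Metric.closedBall xb ρ) (huΓ : u ∈ Gam n l₁ l₂ q)
    {ξ : En n →L[ℝ] ℝ} (hξ : ξ ∈ NhatF n l₁ l₂ q u) (v : En n) :
    ξ v ≤ κ * ‖ξ‖ * Rval q u v := by
  classical
  set Γ := Gam n l₁ l₂ q with hΓ
  have hΓc : IsClosed Γ := isClosed_Gam fun i => ((hq i).continuous)
  have hΓne : Γ.Nonempty := ⟨u, huΓ⟩
  set R := Rval q u v with hR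
  set B : ℝ := 2 * (l₁ + l₂) * (L * ‖v‖ ^ 2) with hB
  have hB0 : 0 ≤ B := by positivity
  set t : ℕ → ℝ := fun k => 1 / (k + 1) with htdef
  have ht_pos : ∀ k, 0 < t k := fun k => by positivity
  have ht0 : Tendsto t atTop (𝓝 0) := tendsto_one_div_add_atTop_nhds_zero_nat
  set y : ℕ → En n := fun k => u + t k • v with hydef
  have hy_tend : Tendsto y atTop (𝓝 u) := by
    have : Tendsto (fun k => u + t k • v) atTop (𝓝 (u + (0:ℝ) • v)) :=
      tendsto_const_nhds.add ((ht0.smul_const v))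
    simpa using this
  -- the eventual properties
  have ev1 : ∀ᶠ k in atTop, ‖t k • v‖ ≤ ρ := by
    have : Tendsto (fun k => ‖t k • v‖) atTop (𝓝 ‖(0:ℝ) • v‖) :=
      (ht0.smul_const v).norm
    simp only [zero_smul, norm_zero] at this
    exact this.eventually_le_const hρ
  have ev2 : ∀ᶠ k in atTop, t k ≤ 1 := by
    exact ht0.eventually_le_const one_pos
  have ev3 : ∀ᶠ k in atTop, ∀ i : Fin (l₁ + l₂), l₁ ≤ (i : ℕ) → q i u ≠ 0 →
      q i (y k) ≤ 0 := by
    rw [Filter.eventually_all]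
    intro i
    by_cases hil : l₁ ≤ (i : ℕ)
    · by_cases hqu : q i u = 0
      · filter_upwards with k h1 h2; exact absurd hqu h2
      · have hneg : q i u < 0 := lt_of_le_of_ne ((huΓ i).2 hil) hqu
        have : Tendsto (fun k => q i (y k)) atTop (𝓝 (q i u)) :=
          ((hq i).continuous.tendsto u).comp hy_tend
        filter_upwards [this.eventually_le_const (by linarith : q i u < (0:ℝ)/2)]
          with k hk _ _
        linarith
    · filter_upwards with k h1; exact absurd h1 hil
  have hu2ρ : u ∈ Metric.closedBall xb (2*ρ) := by
    rw [Metric.mem_closedBall] at hu ⊢; linarith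
  -- residual estimate
  have evres : ∀ᶠ k in atTop, Metric.infDist (y k) Γ ≤ κ * (t k * R + t k ^ 2 * B) := by
    filter_upwards [ev1, ev3] with k h1 h3
    have hyball : y k ∈ Metric.closedBall xb (2*ρ) := by
      rw [Metric.mem_closedBall] at hu ⊢
      calc dist (y k) xb ≤ dist (y k) u + dist u xb := dist_triangle _ _ _
        _ ≤ ρ + ρ := by
            apply add_le_add _ hu
            rw [hydef]; simpa [dist_eq_norm] using h1
        _ = 2 * ρ := by ring
    have htay : ∀ i : Fin (l₁ + l₂),
        |q i (y k) - q i u - t k * fderiv ℝ (q i) u v| ≤ L * t k ^ 2 * ‖v‖ ^ 2 := by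
      intro i
      have := taylor_est (i := i) hL0 hq (hLip i) hyball hu2ρ
      have hsub : y k - u = t k • v := by simp [hydef]
      rw [hsub] at this
      have hmap : fderiv ℝ (q i) u (t k • v) = t k * fderiv ℝ (q i) u v := by
        rw [map_smul]; simp
      rw [hmap] at this
      calc |q i (y k) - q i u - t k * fderiv ℝ (q i) u v| ≤ L * ‖t k • v‖ ^ 2 := this
        _ = L * t k ^ 2 * ‖v‖ ^ 2 := by
            rw [norm_smul, Real.norm_of_nonneg (ht_pos k).le]; ring
    have hres1 : Res q (y k) ≤ t k * R + t k ^ 2 * B := by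
      set e : ℝ := L * t k ^ 2 * ‖v‖ ^ 2 with he
      have he0 : 0 ≤ e := by positivity
      set F1 := Finset.univ.filter (fun i : Fin (l₁ + l₂) => (i : ℕ) < l₁) with hF1
      set F2 := Finset.univ.filter (fun i : Fin (l₁ + l₂) => l₁ ≤ (i : ℕ)) with hF2
      have b1 : ∑ i ∈ F1, |q i (y k)| ≤
          ∑ i ∈ F1, (t k * |fderiv ℝ (q i) u v| + e) := by
        apply Finset.sum_le_sum
        intro i hi
        have hil : (i : ℕ) < l₁ := by
          rw [hF1] at hi; exact (Finset.mem_filter.mp hi).2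
        have hq0 : q i u = 0 := (huΓ i).1 hil
        have := htay i
        rw [hq0] at this
        have habs : |q i (y k)| ≤ |t k * fderiv ℝ (q i) u v| + e := by
          calc |q i (y k)| = |t k * fderiv ℝ (q i) u v +
              (q i (y k) - 0 - t k * fderiv ℝ (q i) u v)| := by ring_nf
            _ ≤ |t k * fderiv ℝ (q i) u v| + |q i (y k) - 0 - t k * fderiv ℝ (q i) u v| :=
              abs_add_le _ _
            _ ≤ |t k * fderiv ℝ (q i) u v| + e := by
                exact add_le_add_right this _
        calc |q i (y k)| ≤ |t k * fderiv ℝ (q i) u v| + e := habs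
          _ = t k * |fderiv ℝ (q i) u v| + e := by
              rw [abs_mul, abs_of_pos (ht_pos k)]
      have b2 : ∑ i ∈ F2, max (q i (y k)) 0 ≤
          ∑ i ∈ F2, (t k * (if q i u = 0 then max (fderiv ℝ (q i) u v) 0 else 0) + e) := by
        apply Finset.sum_le_sum
        intro i hi
        have hil : l₁ ≤ (i : ℕ) := by
          rw [hF2] at hi; exact (Finset.mem_filter.mp hi).2
        by_cases hqu : q i u = 0
        · simp only [hqu, if_true]
          have := htay i
          rw [hqu] at this
          have hup : q i (y k) ≤ t k * fderiv ℝ (q i) u v + e := by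
            have := (abs_le.mp this).2
            linarith
          have : max (q i (y k)) 0 ≤ max (t k * fderiv ℝ (q i) u v + e) 0 :=
            max_le_max hup le_rfl
          calc max (q i (y k)) 0 ≤ max (t k * fderiv ℝ (q i) u v + e) 0 := this
            _ ≤ max (t k * fderiv ℝ (q i) u v) 0 + max e 0 := by
                simpa using max_add_add_le_max_add_max
                  (a := t k * fderiv ℝ (q i) u v) (b := e) (c := (0:ℝ)) (d := (0:ℝ))
            _ = max (t k * fderiv ℝ (q i) u v) 0 + e := by rw [max_eq_left he0]
            _ = t k * max (fderiv ℝ (q i) u v) 0 + e := by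
                rw [← max_eq_left (mul_nonneg (ht_pos k).le (le_max_right
                  (fderiv ℝ (q i) u v) 0))]
                congr 1
                rw [mul_max_of_nonneg _ _ (ht_pos k).le]
                simp
        · have hyneg : q i (y k) ≤ 0 := h3 i hil hqu
          simp only [hqu, if_false, mul_zero, zero_add]
          calc max (q i (y k)) 0 = 0 := max_eq_right hyneg
            _ ≤ e := he0
      have hcard1 : (F1.card : ℝ) ≤ (l₁ + l₂ : ℕ) := by
        exact_mod_cast le_trans (Finset.card_filter_le _ _) (by simp)
      have hcard2 : (F2.card : ℝ) ≤ (l₁ + l₂ : ℕ) := by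
        exact_mod_cast le_trans (Finset.card_filter_le _ _) (by simp)
      have hsum1 : ∑ i ∈ F1, (t k * |fderiv ℝ (q i) u v| + e)
          = t k * ∑ i ∈ F1, |fderiv ℝ (q i) u v| + F1.card * e := by
        rw [Finset.sum_add_distrib, Finset.mul_sum, Finset.sum_const, nsmul_eq_mul]
      have hsum2 : ∑ i ∈ F2, (t k * (if q i u = 0 then max (fderiv ℝ (q i) u v) 0 else 0) + e)
          = t k * ∑ i ∈ F2, (if q i u = 0 then max (fderiv ℝ (q i) u v) 0 else 0)
            + F2.card * e := by
        rw [Finset.sum_add_distrib, Finset.mul_sum, Finset.sum_const, nsmul_eq_mul]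
      have hRexp : R = ∑ i ∈ F1, |fderiv ℝ (q i) u v|
          + ∑ i ∈ F2, (if q i u = 0 then max (fderiv ℝ (q i) u v) 0 else 0) := rfl
      have hResexp : Res q (y k) = ∑ i ∈ F1, |q i (y k)| + ∑ i ∈ F2, max (q i (y k)) 0 := rfl
      have hBe : (F1.card : ℝ) * e + (F2.card : ℝ) * e ≤ t k ^ 2 * B := by
        have : (F1.card : ℝ) * e + (F2.card : ℝ) * e ≤
            ((l₁ + l₂ : ℕ) : ℝ) * e + ((l₁ + l₂ : ℕ) : ℝ) * e :=
          add_le_add (mul_le_mul_of_nonneg_right hcard1 he0)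
            (mul_le_mul_of_nonneg_right hcard2 he0)
        calc (F1.card : ℝ) * e + (F2.card : ℝ) * e
            ≤ ((l₁ + l₂ : ℕ) : ℝ) * e + ((l₁ + l₂ : ℕ) : ℝ) * e := this
          _ = t k ^ 2 * B := by rw [he, hB]; push_cast; ring
      calc Res q (y k) ≤ (t k * ∑ i ∈ F1, |fderiv ℝ (q i) u v| + F1.card * e)
            + (t k * ∑ i ∈ F2, (if q i u = 0 then max (fderiv ℝ (q i) u v) 0 else 0)
              + F2.card * e) := by
            rw [hResexp]
            exact add_le_add (le_trans b1 (le_of_eq hsum1)) (le_trans b2 (le_of_eq hsum2))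
        _ = t k * R + ((F1.card : ℝ) * e + (F2.card : ℝ) * e) := by rw [hRexp]; ring
        _ ≤ t k * R + t k ^ 2 * B := add_le_add_right hBe _
    calc Metric.infDist (y k) Γ ≤ κ * Res q (y k) := hres (y k) hyball
      _ ≤ κ * (t k * R + t k ^ 2 * B) := by
          apply mul_le_mul_of_nonneg_left hres1 hκ.le
  -- nearest points
  have hproj : ∀ k, ∃ p ∈ Γ, Metric.infDist (y k) Γ = dist (y k) p := fun k =>
    hΓc.exists_infDist_eq_dist hΓne (y k)
  choose p hpΓ hpd using hproj
  -- the scaled difference bound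
  have evb : ∀ᶠ k in atTop, ‖(t k)⁻¹ • (p k - u) - v‖ ≤ κ * R + κ * B * t k := by
    filter_upwards [evres] with k hk
    have h1 : (t k)⁻¹ • (p k - u) - v = (t k)⁻¹ • (p k - y k) := by
      rw [hydef]
      have h0 : p k - (u + t k • v) = (p k - u) - t k • v := by abel
      rw [h0, smul_sub ((t k)⁻¹) (p k - u) (t k • v), smul_smul, inv_mul_cancel₀ (ht_pos k).ne', one_smul]
    rw [h1, norm_smul, Real.norm_of_nonneg (inv_nonneg.mpr (ht_pos k).le)]
    have h2 : ‖p k - y k‖ = dist (y k) (p k) := by rw [dist_eq_norm, norm_sub_rev]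
    rw [h2, ← hpd k]
    calc (t k)⁻¹ * Metric.infDist (y k) Γ ≤ (t k)⁻¹ * (κ * (t k * R + t k ^ 2 * B)) := by
          apply mul_le_mul_of_nonneg_left hk (inv_nonneg.mpr (ht_pos k).le)
      _ = κ * R + κ * B * t k := by
          have htne : t k ≠ 0 := (ht_pos k).ne'
          field_simp
  obtain ⟨K, hK⟩ := Filter.eventually_atTop.mp (evb.and ev2)
  -- subsequence converging in the compact ball
  set f : ℕ → En n := fun k => (t (K + k))⁻¹ • (p (K + k) - u) with hfdef
  have hfb : ∀ k, f k ∈ Metric.closedBall (0 : En n) (‖v‖ + (κ * R + κ * B)) := by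
    intro k
    have hKk := hK (K + k) (Nat.le_add_right _ _)
    rw [Metric.mem_closedBall, dist_zero_right]
    have : ‖f k‖ ≤ ‖f k - v‖ + ‖v‖ := by
      calc ‖f k‖ = ‖f k - v + v‖ := by rw [sub_add_cancel]
        _ ≤ ‖f k - v‖ + ‖v‖ := norm_add_le _ _
    have h3 : κ * B * t (K + k) ≤ κ * B := by
      calc κ * B * t (K + k) ≤ κ * B * 1 :=
          mul_le_mul_of_nonneg_left hKk.2 (by positivity)
        _ = κ * B := mul_one _
    calc ‖f k‖ ≤ ‖f k - v‖ + ‖v‖ := this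
      _ ≤ (κ * R + κ * B * t (K + k)) + ‖v‖ := add_le_add_left hKk.1 _
      _ ≤ ‖v‖ + (κ * R + κ * B) := by linarith
  obtain ⟨w, -, φ, hφmono, hφtend⟩ :=
    tendsto_subseq_of_bounded Metric.isBounded_closedBall hfb
  -- w is a tangent vector
  have hwtan : w ∈ tangentConeAt ℝ Γ u := by
    refine mem_tangentConeAt_iff_exists_seq_norm_tendsto_atTop.mpr
      ⟨fun k => (t (K + φ k))⁻¹, fun k => p (K + φ k) - u, ?_, ?_, ?_⟩
    swap
    · filter_upwards with k
      have : u + (p (K + φ k) - u) = p (K + φ k) := by abel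
      rw [this]; exact hpΓ _
    · have hgrow : ∀ k : ℕ, (k : ℝ) + 1 ≤ ‖(t (K + φ k))⁻¹‖ := by
        intro k
        have h1 : (t (K + φ k))⁻¹ = (K + φ k : ℕ) + 1 := by
          rw [htdef]; simp
        rw [Real.norm_eq_abs, h1, abs_of_pos (by positivity)]
        have : (k : ℝ) ≤ ((K + φ k : ℕ) : ℝ) := by
          have : k ≤ K + φ k := le_trans (hφmono.le_apply) (Nat.le_add_left _ _)
          exact_mod_cast this
        linarith
      apply tendsto_atTop_mono hgrow
      apply Filter.tendsto_atTop_add_const_right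
      exact tendsto_natCast_atTop_atTop
    · exact hφtend
  have hξw : ξ w ≤ 0 := hξ w hwtan
  -- ‖v - w‖ ≤ κ R
  have hvw : ‖v - w‖ ≤ κ * R := by
    have htend1 : Tendsto (fun k => ‖f (φ k) - v‖) atTop (𝓝 ‖w - v‖) :=
      (hφtend.sub tendsto_const_nhds).norm
    have htend2 : Tendsto (fun k => κ * R + κ * B * t (K + φ k)) atTop (𝓝 (κ * R)) := by
      have ht' : Tendsto (fun k => t (K + φ k)) atTop (𝓝 0) := by
        apply ht0.comp
        apply tendsto_atTop_mono (fun k => le_trans hφmono.le_apply (Nat.le_add_left _ _))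
        exact tendsto_id
      have : Tendsto (fun k => κ * R + κ * B * t (K + φ k)) atTop
          (𝓝 (κ * R + κ * B * 0)) :=
        tendsto_const_nhds.add (tendsto_const_nhds.mul ht')
      simpa using this
    have hle : ∀ k, ‖f (φ k) - v‖ ≤ κ * R + κ * B * t (K + φ k) := fun k =>
      (hK (K + φ k) (Nat.le_add_right _ _)).1
    have := le_of_tendsto_of_tendsto htend1 htend2 (Filter.Eventually.of_forall hle)
    rwa [norm_sub_rev] at this
  -- conclude
  have hfin : ξ v = ξ w + ξ (v - w) := by rw [map_sub]; ring
  calc ξ v = ξ w + ξ (v - w) := hfin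
    _ ≤ 0 + ‖ξ‖ * ‖v - w‖ := add_le_add hξw
        (le_trans (le_abs_self _) (ξ.le_opNorm _))
    _ ≤ ‖ξ‖ * (κ * R) := by
        rw [zero_add]
        exact mul_le_mul_of_nonneg_left hvw (norm_nonneg _)
    _ = κ * ‖ξ‖ * R := by ring

lemma rep_lemma {κ ρ L : ℝ} (hκ : 0 < κ) (hρ : 0 < ρ) (hL0 : 0 ≤ L)
    (hq : ∀ i, ContDiff ℝ 2 (q i))
    (hres : ∀ x ∈ Metric.closedBall xb (2*ρ), Metric.infDist x (Gam n l₁ l₂ q) ≤ κ * Res q x)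
    (hLip : ∀ i, ∀ z ∈ Metric.closedBall xb (2*ρ), ∀ w ∈ Metric.closedBall xb (2*ρ),
      ‖fderiv ℝ (q i) z - fderiv ℝ (q i) w‖ ≤ L * ‖z - w‖)
    {u : En n} (hu : u ∈ Metric.closedBall xb ρ) (huΓ : u ∈ Gam n l₁ l₂ q)
    {ξ : En n →L[ℝ] ℝ} (hξ : ξ ∈ NhatF n l₁ l₂ q u) :
    ∃ lam ∈ NTheta n l₁ l₂ q u, gradSum n l₁ l₂ q u lam = ξ ∧
      ∀ i, |lam i| ≤ κ * ‖ξ‖ := by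
  classical
  set c : ℝ := κ * ‖ξ‖ with hcdef
  have hc0 : 0 ≤ c := mul_nonneg hκ.le (norm_nonneg _)
  by_contra hcon
  push_neg at hcon
  set P : Set (En (l₁ + l₂)) :=
    {lam | (∀ i, |lam i| ≤ c) ∧ lam ∈ NTheta n l₁ l₂ q u} with hPdef
  -- linearity facts
  have hGlin : IsLinearMap ℝ (fun lam : En (l₁ + l₂) => gradSum n l₁ l₂ q u lam) := by
    constructor
    · intro a b
      simp only [gradSum]
      rw [← Finset.sum_add_distrib]
      apply Finset.sum_congr rfl
      intro i _
      have : (a + b) i = a i + b i := rfl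
      rw [this, add_smul]
    · intro r a
      simp only [gradSum]
      rw [Finset.smul_sum]
      apply Finset.sum_congr rfl
      intro i _
      have : (r • a) i = r * a i := rfl
      rw [this, mul_smul]
  set J : (En n →L[ℝ] ℝ) → En n := fun η => (InnerProductSpace.toDual ℝ (En n)).symm η
    with hJdef
  have hJinner : ∀ (η : En n →L[ℝ] ℝ) (w : En n), ⟪J η, w⟫ = η w := fun η w =>
    InnerProductSpace.toDual_symm_apply
  have hJinj : Function.Injective J :=
    (InnerProductSpace.toDual ℝ (En n)).symm.injective
  have hJlin : IsLinearMap ℝ J := by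
    constructor
    · intro a b; simp [hJdef]
    · intro r a
      apply ext_inner_right ℝ
      intro w
      rw [hJinner, inner_smul_left]
      simp only [starRingEnd_apply, star_trivial]
      rw [hJinner]
      simp
  have hAlin : IsLinearMap ℝ (fun lam : En (l₁ + l₂) => J (gradSum n l₁ l₂ q u lam)) := by
    constructor
    · intro a b; rw [hGlin.map_add, hJlin.map_add]
    · intro r a; rw [hGlin.map_smul, hJlin.map_smul]
  -- P is convex
  have hPconv : Convex ℝ P := by
    intro a haP b hbP s r hs hr hsr
    have happ : ∀ i, (s • a + r • b) i = s * a i + r * b i := fun i => rfl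
    refine ⟨fun i => ?_, fun i hil => ⟨?_, fun hqu => ?_⟩⟩
    · rw [happ i]
      calc |s * a i + r * b i| ≤ |s * a i| + |r * b i| := abs_add_le _ _
        _ = s * |a i| + r * |b i| := by
            rw [abs_mul, abs_mul, abs_of_nonneg hs, abs_of_nonneg hr]
        _ ≤ s * c + r * c := add_le_add
            (mul_le_mul_of_nonneg_left (haP.1 i) hs)
            (mul_le_mul_of_nonneg_left (hbP.1 i) hr)
        _ = c := by rw [← add_mul, hsr, one_mul]
    · rw [happ i]
      have := (haP.2 i hil).1
      have := (hbP.2 i hil).1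
      positivity
    · rw [happ i, (haP.2 i hil).2 hqu, (hbP.2 i hil).2 hqu]
      ring
  -- P is compact
  have hPclosed : IsClosed P := by
    have h1 : IsClosed {lam : En (l₁ + l₂) | ∀ i, |lam i| ≤ c} := by
      have : {lam : En (l₁ + l₂) | ∀ i, |lam i| ≤ c}
          = ⋂ i, {lam : En (l₁ + l₂) | |lam i| ≤ c} := by
        ext lam; simp
      rw [this]
      refine isClosed_iInter fun i => ?_
      have hcont : Continuous fun lam : En (l₁ + l₂) => lam i :=
        (EuclideanSpace.proj (𝕜 := ℝ) i).continuous
      exact isClosed_le (continuous_abs.comp hcont) continuous_const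
    have h2 : IsClosed (NTheta n l₁ l₂ q u) := by
      have : NTheta n l₁ l₂ q u = ⋂ i : Fin (l₁ + l₂),
          {lam : En (l₁ + l₂) | l₁ ≤ (i : ℕ) → 0 ≤ lam i ∧ (q i u ≠ 0 → lam i = 0)} := by
        ext lam; simp [NTheta]
      rw [this]
      refine isClosed_iInter fun i => ?_
      have hcont : Continuous fun lam : En (l₁ + l₂) => lam i :=
        (EuclideanSpace.proj (𝕜 := ℝ) i).continuous
      by_cases hil : l₁ ≤ (i : ℕ)
      · have he : {lam : En (l₁ + l₂) | l₁ ≤ (i : ℕ) → 0 ≤ lam i ∧ (q i u ≠ 0 → lam i = 0)}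
            = {lam : En (l₁ + l₂) | 0 ≤ lam i} ∩
              {lam : En (l₁ + l₂) | q i u ≠ 0 → lam i = 0} := by
          ext lam; simp [hil]
        rw [he]
        refine IsClosed.inter (isClosed_le continuous_const hcont) ?_
        by_cases hqu : q i u = 0
        · have : {lam : En (l₁ + l₂) | q i u ≠ 0 → lam i = 0} = Set.univ := by
            ext lam; simp [hqu]
          rw [this]; exact isClosed_univ
        · have : {lam : En (l₁ + l₂) | q i u ≠ 0 → lam i = 0}
              = {lam : En (l₁ + l₂) | lam i = 0} := by
            ext lam; simp [hqu]
          rw [this]; exact isClosed_eq hcont continuous_const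
      · have : {lam : En (l₁ + l₂) | l₁ ≤ (i : ℕ) → 0 ≤ lam i ∧ (q i u ≠ 0 → lam i = 0)}
            = Set.univ := by
          ext lam; simp [hil]
        rw [this]; exact isClosed_univ
    exact h1.inter h2
  have hPbdd : Bornology.IsBounded P := by
    apply (Metric.isBounded_closedBall
      (x := (0 : En (l₁ + l₂))) (r := Real.sqrt ((l₁ + l₂ : ℕ) * c ^ 2))).subset
    intro lam hlam
    rw [Metric.mem_closedBall, dist_zero_right]
    have hn : ‖lam‖ = Real.sqrt (∑ i, ‖lam i‖ ^ 2) := EuclideanSpace.norm_eq lam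
    rw [hn]
    apply Real.sqrt_le_sqrt
    calc ∑ i, ‖lam i‖ ^ 2 ≤ ∑ _i : Fin (l₁ + l₂), c ^ 2 := by
          apply Finset.sum_le_sum
          intro i _
          have : ‖lam i‖ = |lam i| := rfl
          rw [this]
          exact pow_le_pow_left₀ (abs_nonneg _) (hlam.1 i) 2
      _ = (l₁ + l₂ : ℕ) * c ^ 2 := by rw [Finset.sum_const, Finset.card_univ]; simp
  have hPcpt : IsCompact P := isCompact_of_isClosed_isBounded hPclosed hPbdd
  -- the image S
  have hAcont : Continuous (fun lam : En (l₁ + l₂) => J (gradSum n l₁ l₂ q u lam)) := by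
    apply Continuous.comp
    · exact (InnerProductSpace.toDual ℝ (En n)).symm.continuous
    · unfold gradSum
      apply continuous_finset_sum
      intro i _
      exact ((EuclideanSpace.proj (𝕜 := ℝ) i).continuous).smul continuous_const
  set S : Set (En n) := (fun lam : En (l₁ + l₂) => J (gradSum n l₁ l₂ q u lam)) '' P
    with hSdef
  have hScpt : IsCompact S := hPcpt.image hAcont
  have hSconv : Convex ℝ S := hPconv.is_linear_image hAlin
  have hzS : J ξ ∉ S := by
    rintro ⟨lam, hlamP, hlameq⟩
    have heq : gradSum n l₁ l₂ q u lam = ξ := hJinj hlameq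
    obtain ⟨i, hi⟩ := hcon lam hlamP.2 heq
    exact absurd (hlamP.1 i) (not_le.mpr hi)
  obtain ⟨F, b, hFS, hFz⟩ := geometric_hahn_banach_closed_point hSconv hScpt.isClosed hzS
  set v : En n := J F with hvdef
  have hFinner : ∀ w : En n, F w = ⟪v, w⟫ := fun w => (hJinner F w).symm
  have hsep : ∀ lam ∈ P, gradSum n l₁ l₂ q u lam v < b := by
    intro lam hlam
    have h1 := hFS _ (Set.mem_image_of_mem _ hlam)
    rw [hFinner] at h1
    rwa [real_inner_comm, hJinner] at h1
  have hξv : b < ξ v := by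
    rw [hFinner, real_inner_comm, hJinner] at hFz
    exact hFz
  -- the explicit multiplier achieving c * Rval
  have hsign : ∀ x : ℝ, Real.sign x * x = |x| := by
    intro x
    rcases lt_trichotomy x 0 with h | h | h
    · rw [Real.sign_of_neg h, abs_of_neg h]; ring
    · simp [h]
    · rw [Real.sign_of_pos h, abs_of_pos h]; ring
  set g : Fin (l₁ + l₂) → ℝ := fun i => fderiv ℝ (q i) u v with hgdef
  set lamh : En (l₁ + l₂) := WithLp.toLp 2 (fun i : Fin (l₁ + l₂) =>
    if (i : ℕ) < l₁ then c * Real.sign (g i)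
    else if q i u = 0 ∧ 0 ≤ g i then c else 0 : Fin (l₁ + l₂) → ℝ) with hlamhdef
  have hlamh_app : ∀ i : Fin (l₁ + l₂), lamh i =
      if (i : ℕ) < l₁ then c * Real.sign (g i)
      else if q i u = 0 ∧ 0 ≤ g i then c else 0 := fun i => rfl
  have hlamhP : lamh ∈ P := by
    refine ⟨fun i => ?_, fun i hil => ?_⟩
    · rw [hlamh_app i]
      split_ifs with h1 h2
      · rw [abs_mul, abs_of_nonneg hc0]
        have hb1 : |Real.sign (g i)| ≤ 1 := by
          rcases Real.sign_apply_eq (g i) with h | h | h <;> rw [h] <;> norm_num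
        calc c * |Real.sign (g i)| ≤ c * 1 := mul_le_mul_of_nonneg_left hb1 hc0
          _ = c := mul_one c
      · rw [abs_of_nonneg hc0]
      · simp [hc0]
    · have hnl : ¬ ((i : ℕ) < l₁) := not_lt.mpr hil
      rw [hlamh_app i]
      rw [if_neg hnl]
      constructor
      · split_ifs with h2
        · exact hc0
        · exact le_refl 0
      · intro hqu
        rw [if_neg]
        rintro ⟨h1, -⟩
        exact hqu h1
  have hlamhval : gradSum n l₁ l₂ q u lamh v = c * Rval q u v := by
    rw [gradSum_apply]
    have hsplit := Finset.sum_filter_add_sum_filter_not Finset.univ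
      (fun i : Fin (l₁ + l₂) => (i : ℕ) < l₁)
      (fun i => lamh i * fderiv ℝ (q i) u v)
    rw [← hsplit]
    have hfilter : Finset.univ.filter (fun i : Fin (l₁ + l₂) => ¬ (i : ℕ) < l₁)
        = Finset.univ.filter (fun i : Fin (l₁ + l₂) => l₁ ≤ (i : ℕ)) := by
      apply Finset.filter_congr
      intro i _
      simp [not_lt]
    rw [hfilter]
    have h1 : ∑ i ∈ Finset.univ.filter (fun i : Fin (l₁ + l₂) => (i : ℕ) < l₁),
        lamh i * fderiv ℝ (q i) u v
        = c * ∑ i ∈ Finset.univ.filter (fun i : Fin (l₁ + l₂) => (i : ℕ) < l₁),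
            |fderiv ℝ (q i) u v| := by
      rw [Finset.mul_sum]
      apply Finset.sum_congr rfl
      intro i hi
      have hil := (Finset.mem_filter.mp hi).2
      rw [hlamh_app i, if_pos hil]
      have : fderiv ℝ (q i) u v = g i := rfl
      rw [this, mul_assoc, hsign (g i)]
    have h2 : ∑ i ∈ Finset.univ.filter (fun i : Fin (l₁ + l₂) => l₁ ≤ (i : ℕ)),
        lamh i * fderiv ℝ (q i) u v
        = c * ∑ i ∈ Finset.univ.filter (fun i : Fin (l₁ + l₂) => l₁ ≤ (i : ℕ)),
            (if q i u = 0 then max (fderiv ℝ (q i) u v) 0 else 0) := by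
      rw [Finset.mul_sum]
      apply Finset.sum_congr rfl
      intro i hi
      have hil := (Finset.mem_filter.mp hi).2
      have hnl : ¬ ((i : ℕ) < l₁) := not_lt.mpr hil
      rw [hlamh_app i, if_neg hnl]
      have hgi : fderiv ℝ (q i) u v = g i := rfl
      rw [hgi]
      by_cases hqu : q i u = 0
      · rw [if_pos hqu]
        by_cases hpos : 0 ≤ g i
        · rw [if_pos ⟨hqu, hpos⟩, max_eq_left hpos]
        · rw [if_neg (by tauto), max_eq_right (le_of_not_ge hpos)]
          ring
      · rw [if_neg hqu, if_neg (by tauto)]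
        ring
    rw [h1, h2, Rval]
    ring
  have hkey := key_dir hκ hρ hL0 hq hres hLip hu huΓ hξ v
  have hlt : c * Rval q u v < ξ v := by
    have := hsep lamh hlamhP
    rw [hlamhval] at this
    linarith
  rw [← hcdef] at hkey
  linarith

end Aux

/-- under MSCQ and BEPP, δ_Γ is prox-regular (and subdifferentially
continuous) at x̄ for every limiting normal x̄*: the quadratic lower estimate holds. -/
theorem stmt9 (n l₁ l₂ : ℕ) (q : Fin (l₁ + l₂) → En n → ℝ) (xb : En n)
    (hq : ∀ i, ContDiff ℝ 2 (q i)) (hfeas : Feas n l₁ l₂ q xb)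
    (hmscq : MSCQ n l₁ l₂ q xb) (hbepp : BEPP n l₁ l₂ q xb) :
    ∀ ξb ∈ Nlim n l₁ l₂ q xb, ∃ r > (0 : ℝ), ∃ ε > (0 : ℝ),
      ∀ x ∈ Metric.closedBall xb ε, x ∈ Gam n l₁ l₂ q →
      ∀ u ∈ Metric.closedBall xb ε, u ∈ Gam n l₁ l₂ q →
      ∀ ξ ∈ Nlim n l₁ l₂ q u, ‖ξ - ξb‖ ≤ ε →
        ξ (x - u) - r / 2 * ‖x - u‖ ^ 2 ≤ 0 := by
  intro ξb hξb
  obtain ⟨κ, hκ, U, hU, hUres⟩ := hmscq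
  obtain ⟨δ, hδ, hδU⟩ := Metric.mem_nhds_iff.mp hU
  set ρ : ℝ := δ / 4 with hρdef
  have hρ : 0 < ρ := by positivity
  have hres : ∀ x ∈ Metric.closedBall xb (2*ρ),
      Metric.infDist x (Gam n l₁ l₂ q) ≤ κ * Res q x := by
    intro x hx
    apply hUres
    apply hδU
    rw [Metric.mem_closedBall] at hx
    rw [Metric.mem_ball]
    calc dist x xb ≤ 2 * ρ := hx
      _ < δ := by rw [hρdef]; linarith
  obtain ⟨L, hL0, hLip⟩ := exists_grad_lipschitz (xb := xb) hq (2*ρ)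
  set M : ℝ := ‖ξb‖ + 2 with hMdef
  have hM : 0 < M := by positivity
  set r : ℝ := 2 * ((l₁ + l₂ : ℕ) * (κ * M) * L) + 1 with hrdef
  have hr : 0 < r := by positivity
  set ε : ℝ := min (ρ/2) 1 with hεdef
  have hε : 0 < ε := by positivity
  have hερ : ε ≤ ρ/2 := min_le_left _ _
  have hε1 : ε ≤ 1 := min_le_right _ _
  refine ⟨r, hr, ε, hε, ?_⟩
  intro x hx hxΓ u hu huΓ ξ hξ hξb'
  obtain ⟨xs, ξs, hmem, hxs, hξs⟩ := hξ
  -- eventual membership in closedBall xb ρ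
  have ev_xs : ∀ᶠ k in atTop, xs k ∈ Metric.closedBall xb ρ := by
    have h1 : ∀ᶠ k in atTop, xs k ∈ Metric.ball u (ρ/2) :=
      hxs (Metric.ball_mem_nhds u (by positivity))
    filter_upwards [h1] with k hk
    rw [Metric.mem_ball] at hk
    rw [Metric.mem_closedBall]
    rw [Metric.mem_closedBall] at hu
    calc dist (xs k) xb ≤ dist (xs k) u + dist u xb := dist_triangle _ _ _
      _ ≤ ρ/2 + ρ/2 := add_le_add hk.le (le_trans hu hερ)
      _ = ρ := by ring
  have hξnorm : ‖ξ‖ < M := by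
    calc ‖ξ‖ = ‖ξb + (ξ - ξb)‖ := by rw [add_sub_cancel]
      _ ≤ ‖ξb‖ + ‖ξ - ξb‖ := norm_add_le _ _
      _ ≤ ‖ξb‖ + 1 := add_le_add_right (le_trans hξb' hε1) _
      _ < M := by rw [hMdef]; linarith
  have ev_ξs : ∀ᶠ k in atTop, ‖ξs k‖ ≤ M := by
    exact hξs.norm.eventually_le_const hξnorm
  -- the eventual inequality
  have hxball : x ∈ Metric.closedBall xb (2*ρ) := by
    rw [Metric.mem_closedBall] at hx ⊢
    calc dist x xb ≤ ε := hx
      _ ≤ 2 * ρ := by linarith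
  have ev_ineq : ∀ᶠ k in atTop,
      ξs k (x - xs k) ≤ r / 2 * ‖x - xs k‖ ^ 2 := by
    filter_upwards [ev_xs, ev_ξs] with k hk1 hk2
    obtain ⟨lam, hlamN, hlamG, hlamB⟩ := rep_lemma hκ hρ hL0 hq hres hLip hk1
      (hmem k).1 (hmem k).2
    have hk1' : xs k ∈ Metric.closedBall xb (2*ρ) := by
      rw [Metric.mem_closedBall] at hk1 ⊢
      linarith
    have hlamB' : ∀ i, |lam i| ≤ κ * M := fun i =>
      le_trans (hlamB i) (mul_le_mul_of_nonneg_left hk2 hκ.le)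
    have := lemA (c := κ * M) hL0 (by positivity) hq hLip hk1' (hmem k).1
      hxball hxΓ hlamN hlamG hlamB'
    calc ξs k (x - xs k) ≤ ((l₁ : ℝ) + (l₂ : ℝ)) * (κ * M) * L * ‖x - xs k‖ ^ 2 := this
      _ ≤ r / 2 * ‖x - xs k‖ ^ 2 := by
          apply mul_le_mul_of_nonneg_right _ (by positivity)
          rw [hrdef]
          push_cast
          linarith
  -- pass to the limit
  have hlim1 : Tendsto (fun k => ξs k (x - xs k)) atTop (𝓝 (ξ (x - u))) := by
    have h1 : Tendsto (fun k => (ξs k, x - xs k)) atTop (𝓝 (ξ, x - u)) :=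
      hξs.prodMk_nhds (tendsto_const_nhds.sub hxs)
    exact (isBoundedBilinearMap_apply.continuous.tendsto (ξ, x - u)).comp h1
  have hlim2 : Tendsto (fun k => r / 2 * ‖x - xs k‖ ^ 2) atTop
      (𝓝 (r / 2 * ‖x - u‖ ^ 2)) := by
    apply Tendsto.const_mul
    exact ((tendsto_const_nhds.sub hxs).norm).pow 2
  have hfin := le_of_tendsto_of_tendsto hlim1 hlim2 ev_ineq
  linarith
end
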